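/- Let R = ℂ[v₁, v₂, v₃] be the polynomial ring in three variables over ℂ, let D be the unique ℂ-derivation of R with D v₁ = v₁² − v₃, D v₂ = v₂² + v₃ − v₁v₂, D v₃ = v₁v₃, and let E₂ be the unique ℂ-derivation of R with E₂ v₁ = 0, E₂ v₂ = 1, E₂ v₃ = 0. Then the commutator of derivations satisfies [D, E₂] = −(2v₂ − v₁) · E₂, i.e., D ∘ E₂ − E₂ ∘ D equals the derivation E₂ multiplied by the polynomial −(2v₂ − v₁). -/
import Mathlib


open MvPolynomial

/-- Let `R = ℂ[v₁, v₂, v₃]` (with `v₁ = X 0`, `v₂ = X 1`, `v₃ = X 2`), let `D` be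
the ℂ-derivation with `D v₁ = v₁² - v₃`, `D v₂ = v₂² + v₃ - v₁v₂`, `D v₃ = v₁v₃`,
and let `E₂` be the ℂ-derivation with `E₂ v₁ = 0`, `E₂ v₂ = 1`, `E₂ v₃ = 0`.
Then `[D, E₂] = -(2v₂ - v₁) · E₂` as derivations: for every `p`,
`D (E₂ p) - E₂ (D p) = -(2v₂ - v₁) * E₂ p`. -/
theorem A2_Kostant_commutator_relation_alpha2
    (D E₂ : Derivation ℂ (MvPolynomial (Fin 3) ℂ) (MvPolynomial (Fin 3) ℂ))
    (hD1 : D (X 0) = (X 0) ^ 2 - X 2)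
    (hD2 : D (X 1) = (X 1) ^ 2 + X 2 - X 0 * X 1)
    (hD3 : D (X 2) = X 0 * X 2)
    (hE1 : E₂ (X 0) = 0) (hE2 : E₂ (X 1) = 1) (hE3 : E₂ (X 2) = 0) :
    ∀ p : MvPolynomial (Fin 3) ℂ,
      D (E₂ p) - E₂ (D p) = -(2 * X 1 - X 0) * E₂ p := by
  have key : ⁅D, E₂⁆ = (-(2 * X 1 - X 0) : MvPolynomial (Fin 3) ℂ) • E₂ := by
    apply derivation_ext
    intro i
    fin_cases i <;>
      simp [Derivation.commutator_apply, hD1, hD2, hD3, hE1, hE2, hE3, smul_eq_mul]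
  intro p
  have := congrArg (fun d : Derivation ℂ (MvPolynomial (Fin 3) ℂ) (MvPolynomial (Fin 3) ℂ) => d p) key
  simpa [Derivation.commutator_apply, smul_eq_mul] using this
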